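/- Let $\rho$ be the two-qubit state $\frac{1}{2}(|+\rangle\langle+|\otimes|+\rangle\langle+| + |-\rangle\langle-|\otimes|\widetilde{+}\rangle\langle\widetilde{+}|)$. For every $n \geq 1$ and every positive semidefinite operator $A$ on $\mathbb{C}^{4^n}$ with $\mathrm{Tr}(A) = 4^n/2$ that decomposes as a sum of rank-one operators each supported on at most $2$ computational basis vectors, one has $\mathrm{Tr}(\rho^{\otimes n} A) \leq \frac{1}{2}\left(1 + \frac{\sqrt 2}{2}\right)$. -/

import Mathlib

open Matrix ComplexOrder

noncomputable def plusV : Fin 2 → ℂ := fun _ => 1 / Real.sqrt 2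

noncomputable def minusV : Fin 2 → ℂ :=
  fun x => if x = 0 then 1 / Real.sqrt 2 else -(1 / Real.sqrt 2)

noncomputable def tplusV : Fin 2 → ℂ :=
  fun x => if x = 0 then 1 / Real.sqrt 2 else Complex.I / Real.sqrt 2

/-- The state `ρ = ½(|+⟩⟨+|⊗|+⟩⟨+| + |-⟩⟨-|⊗|+̃⟩⟨+̃|)`. -/
noncomputable def boundState : Matrix (Fin 2 × Fin 2) (Fin 2 × Fin 2) ℂ :=
  ((1 : ℂ) / 2) •
    (Matrix.vecMulVec (fun x => plusV x.1 * plusV x.2)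
        (star fun x : Fin 2 × Fin 2 => plusV x.1 * plusV x.2)
      + Matrix.vecMulVec (fun x => minusV x.1 * tplusV x.2)
        (star fun x : Fin 2 × Fin 2 => minusV x.1 * tplusV x.2))

/-- `ρ^{⊗n}` as a matrix indexed by `n`-tuples of basis labels. -/
noncomputable def boundStatePow (n : ℕ) :
    Matrix (Fin n → Fin 2 × Fin 2) (Fin n → Fin 2 × Fin 2) ℂ :=
  Matrix.of fun v w => ∏ k : Fin n, boundState (v k) (w k)

lemma hp4 : ((Real.sqrt 2 : ℝ) : ℂ)^4 = 4 := by
  have : ((Real.sqrt 2 : ℝ) : ℂ)^2 = 2 := by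
    norm_cast; rw [Real.sq_sqrt]; norm_num
  rw [show (4:ℕ) = 2*2 from rfl, pow_mul, this]; norm_num

set_option maxHeartbeats 1000000 in
lemma bs_val (v w : Fin 2 × Fin 2) :
    boundState v w = if v.1 = w.1
      then (if v.2 = w.2 then (if v = w then (1:ℂ)/4 else 0)
            else (if v.2 = 0 then (1 - Complex.I)/8 else (1 + Complex.I)/8))
      else (if v.2 = w.2 then 0
            else (if v.2 = 0 then (1 + Complex.I)/8 else (1 - Complex.I)/8)) := by
  obtain ⟨a, b⟩ := v; obtain ⟨c, d⟩ := w
  fin_cases a <;> fin_cases b <;> fin_cases c <;> fin_cases d <;>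
    simp only [boundState, plusV, minusV, tplusV, Matrix.vecMulVec_apply, Pi.star_apply,
      Matrix.smul_apply, Matrix.add_apply, star_mul', star_div₀, star_one, star_neg,
      Complex.star_def, Complex.conj_ofReal, Complex.conj_I, reduceIte, Prod.mk.injEq] <;>
    norm_num <;>
    (try (field_simp; ring_nf; rw [hp4] <;> try rw [hp2])) <;>
    ring_nf <;> norm_num

noncomputable def Complex.abs : AbsoluteValue ℂ ℝ where
  toFun := fun z => ‖z‖
  map_mul' := norm_mul
  nonneg' := norm_nonneg
  eq_zero' _ := norm_eq_zero
  add_le' := norm_add_le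

@[simp] lemma Complex.abs_def' (z : ℂ) : Complex.abs z = ‖z‖ := rfl

lemma Complex.abs_conj (z : ℂ) : Complex.abs ((starRingEnd ℂ) z) = Complex.abs z := by
  simp

lemma abs_one_add_I : Complex.abs (1 + Complex.I) = Real.sqrt 2 := by
  rw [Complex.abs_def', Complex.norm_def]; norm_num [Complex.normSq_apply]

lemma abs_one_sub_I : Complex.abs (1 - Complex.I) = Real.sqrt 2 := by
  rw [Complex.abs_def', Complex.norm_def]; norm_num [Complex.normSq_apply]

@[simp] lemma norm_one_add_I' : ‖1 + Complex.I‖ = Real.sqrt 2 := abs_one_add_I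

@[simp] lemma norm_one_sub_I' : ‖1 - Complex.I‖ = Real.sqrt 2 := abs_one_sub_I

lemma bs_diag (v : Fin 2 × Fin 2) : boundState v v = 1/4 := by
  rw [bs_val]; simp

lemma bs_abs_off {v w : Fin 2 × Fin 2} (h : v ≠ w) :
    Complex.abs (boundState v w) ≤ Real.sqrt 2 / 8 := by
  rw [bs_val]
  have h2 : (0:ℝ) ≤ Real.sqrt 2 := Real.sqrt_nonneg 2
  split_ifs <;>
    simp_all [map_div₀, abs_one_add_I, abs_one_sub_I] <;>
    positivity

lemma sqrt2_le_two : Real.sqrt 2 ≤ 2 := by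
  nlinarith [Real.sq_sqrt (by norm_num : (0:ℝ) ≤ 2), Real.sqrt_nonneg 2]

lemma bs_abs_le (v w : Fin 2 × Fin 2) : Complex.abs (boundState v w) ≤ 1/4 := by
  by_cases h : v = w
  · subst h; rw [bs_diag]; norm_num
  · calc Complex.abs (boundState v w) ≤ Real.sqrt 2 / 8 := bs_abs_off h
      _ ≤ 1/4 := by nlinarith [sqrt2_le_two]

lemma bsp_abs_le (n : ℕ) (v w : Fin n → Fin 2 × Fin 2) :
    Complex.abs (boundStatePow n v w) ≤ (1/4:ℝ)^n := by
  rw [boundStatePow, Matrix.of_apply, map_prod]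
  calc ∏ k : Fin n, Complex.abs (boundState (v k) (w k))
      ≤ ∏ _k : Fin n, (1/4:ℝ) :=
        Finset.prod_le_prod (fun k _ => AbsoluteValue.nonneg _ _) (fun k _ => bs_abs_le _ _)
    _ = (1/4:ℝ)^n := by simp

lemma bsp_abs_off {n : ℕ} {v w : Fin n → Fin 2 × Fin 2} (h : v ≠ w) :
    Complex.abs (boundStatePow n v w) ≤ Real.sqrt 2 / 2 * (1/4:ℝ)^n := by
  obtain ⟨k0, hk0⟩ := Function.ne_iff.mp h
  rw [boundStatePow, Matrix.of_apply, map_prod]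
  rw [← Finset.mul_prod_erase Finset.univ _ (Finset.mem_univ k0)]
  have h1 : ∏ k ∈ Finset.univ.erase k0, Complex.abs (boundState (v k) (w k))
      ≤ (1/4:ℝ)^(n-1) := by
    calc ∏ k ∈ Finset.univ.erase k0, Complex.abs (boundState (v k) (w k))
        ≤ ∏ _k ∈ Finset.univ.erase k0, (1/4:ℝ) :=
          Finset.prod_le_prod (fun k _ => AbsoluteValue.nonneg _ _) (fun k _ => bs_abs_le _ _)
      _ = (1/4:ℝ)^(n-1) := by
          rw [Finset.prod_const, Finset.card_erase_of_mem (Finset.mem_univ k0)]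
          simp
  have h2 := bs_abs_off hk0
  have hn : 1 ≤ n := Nat.one_le_iff_ne_zero.mpr (by rintro rfl; exact k0.elim0)
  calc Complex.abs (boundState (v k0) (w k0)) *
        ∏ k ∈ Finset.univ.erase k0, Complex.abs (boundState (v k) (w k))
      ≤ (Real.sqrt 2 / 8) * (1/4:ℝ)^(n-1) := by
        apply mul_le_mul h2 h1 (Finset.prod_nonneg fun k _ => AbsoluteValue.nonneg _ _)
          (by positivity)
    _ = Real.sqrt 2 / 2 * (1/4:ℝ)^n := by
        rw [show n = (n-1) + 1 from (Nat.succ_pred_eq_of_pos hn).symm]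
        simp only [Nat.add_sub_cancel, pow_succ]
        ring

theorem stmt_13 (n : ℕ) (hn : 1 ≤ n)
    (A : Matrix (Fin n → Fin 2 × Fin 2) (Fin n → Fin 2 × Fin 2) ℂ)
    (hPSD : A.PosSemidef) (htr : A.trace = (4 : ℂ) ^ n / 2)
    (m : ℕ) (lam : Fin m → ℝ) (hlam : ∀ j, 0 ≤ lam j)
    (φ : Fin m → (Fin n → Fin 2 × Fin 2) → ℂ)
    (hsupp : ∀ j, (Finset.univ.filter fun v => φ j v ≠ 0).card ≤ 2)
    (hdecomp : A = ∑ j : Fin m,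
      ((lam j : ℂ)) • Matrix.vecMulVec (φ j) (star (φ j))) :
    ((boundStatePow n * A).trace).re ≤ 1 / 2 * (1 + Real.sqrt 2 / 2) := by
  classical
  set B := boundStatePow n with hB
  set f : Fin m → (Fin n → Fin 2 × Fin 2) → ℝ := fun j v => Complex.abs (φ j v) with hf
  set S : Fin m → ℝ := fun j => ∑ v, (f j v)^2 with hSdef
  set q : Fin m → ℂ :=
    fun j => ∑ v, ∑ w, B v w * (φ j w * (starRingEnd ℂ) (φ j v)) with hq
  set d : ℝ := (1/4:ℝ)^n with hd
  have hd0 : 0 ≤ d := by positivity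
  have hf0 : ∀ j v, 0 ≤ f j v := fun j v => AbsoluteValue.nonneg _ _
  -- trace identity
  have htrace : (B * A).trace = ∑ j, (lam j : ℂ) * q j := by
    rw [hdecomp, Matrix.mul_sum, Matrix.trace_sum]
    refine Finset.sum_congr rfl fun j _ => ?_
    rw [Matrix.mul_smul, Matrix.trace_smul, smul_eq_mul]
    congr 1
  -- trace of A
  have htrA : ∑ j, lam j * S j = (4:ℝ)^n / 2 := by
    have h1 : A.trace = ((∑ j, lam j * S j : ℝ) : ℂ) := by
      rw [hdecomp, Matrix.trace_sum]
      push_cast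
      refine Finset.sum_congr rfl fun j _ => ?_
      rw [Matrix.trace_smul, smul_eq_mul]
      congr 1
      simp only [Matrix.trace, Matrix.diag, Matrix.vecMulVec_apply, Pi.star_apply,
        Complex.star_def, hSdef]
      push_cast
      refine Finset.sum_congr rfl fun v _ => ?_
      rw [Complex.mul_conj]
      norm_cast
      try exact (Complex.sq_norm _).symm
    rw [htr] at h1
    have h2 := congrArg Complex.re h1
    simp only [Complex.ofReal_re] at h2
    rw [← h2]
    have h3 : ((4:ℂ)^n/2) = (((4:ℝ)^n/2 : ℝ) : ℂ) := by push_cast; ring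
    rw [h3, Complex.ofReal_re]
  -- per-j bound
  have key : ∀ j, (q j).re ≤ (1 + Real.sqrt 2 / 2) * d * S j := by
    intro j
    set c : ℝ := Real.sqrt 2 / 2 * d with hc
    have hc0 : (0:ℝ) ≤ c := by positivity
    set T : ℝ := ∑ v, f j v with hT
    have hS0 : 0 ≤ S j := Finset.sum_nonneg fun v _ => sq_nonneg _
    have hCS : T^2 ≤ 2 * S j := by
      set Supp := Finset.univ.filter fun v => φ j v ≠ 0 with hSupp
      have hTS : (∑ v ∈ Supp, f j v) = T := by
        refine Finset.sum_filter_of_ne fun v _ hfv => ?_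
        intro h0
        exact hfv (by simp [hf, h0])
      have h3 : (∑ v ∈ Supp, f j v * 1)^2 ≤ (∑ v ∈ Supp, (f j v)^2) * ∑ v ∈ Supp, (1:ℝ)^2 :=
        Finset.sum_mul_sq_le_sq_mul_sq _ _ _
      have h4 : (∑ v ∈ Supp, (1:ℝ)^2) ≤ 2 := by
        simp only [one_pow, Finset.sum_const, nsmul_eq_mul, mul_one]
        exact_mod_cast hsupp j
      have h5 : (∑ v ∈ Supp, (f j v)^2) ≤ S j :=
        Finset.sum_le_sum_of_subset_of_nonneg (Finset.filter_subset _ _)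
          (fun v _ _ => sq_nonneg _)
      have h45 : 0 ≤ ∑ v ∈ Supp, (f j v)^2 := Finset.sum_nonneg fun v _ => sq_nonneg _
      calc T^2 = (∑ v ∈ Supp, f j v * 1)^2 := by rw [← hTS]; simp
        _ ≤ (∑ v ∈ Supp, (f j v)^2) * ∑ v ∈ Supp, (1:ℝ)^2 := h3
        _ ≤ S j * 2 := mul_le_mul h5 h4 (Finset.sum_nonneg fun v _ => sq_nonneg _) hS0
        _ = 2 * S j := mul_comm _ _
    have h6 : (q j).re ≤ ∑ v, ∑ w, Complex.abs (B v w) * (f j w * f j v) := by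
      refine (Complex.re_le_norm _).trans ?_
      refine (Complex.abs.sum_le _ _).trans ?_
      refine Finset.sum_le_sum fun v _ => ?_
      refine (Complex.abs.sum_le _ _).trans ?_
      refine Finset.sum_le_sum fun w _ => le_of_eq ?_
      rw [Complex.abs.map_mul, Complex.abs.map_mul, Complex.abs_conj]
    have h7 : ∀ v, ∑ w, Complex.abs (B v w) * (f j w * f j v)
        ≤ d * (f j v)^2 + c * ((T - f j v) * f j v) := by
      intro v
      rw [← Finset.add_sum_erase _ _ (Finset.mem_univ v)]
      have hdiag : Complex.abs (B v v) * (f j v * f j v) ≤ d * (f j v)^2 := by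
        rw [sq]
        exact mul_le_mul_of_nonneg_right (bsp_abs_le n v v)
          (mul_nonneg (hf0 j v) (hf0 j v))
      have hoff : ∑ w ∈ Finset.univ.erase v, Complex.abs (B v w) * (f j w * f j v)
          ≤ c * ((T - f j v) * f j v) := by
        have hb : ∀ w ∈ Finset.univ.erase v, Complex.abs (B v w) * (f j w * f j v)
            ≤ c * (f j w * f j v) := by
          intro w hw
          have hne : v ≠ w := fun h => (Finset.mem_erase.mp hw).1 h.symm
          exact mul_le_mul_of_nonneg_right (bsp_abs_off hne)
            (mul_nonneg (hf0 _ _) (hf0 _ _))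
        refine (Finset.sum_le_sum hb).trans_eq ?_
        rw [← Finset.mul_sum, ← Finset.sum_mul,
          Finset.sum_erase_eq_sub (Finset.mem_univ v), ← hT]
      exact add_le_add hdiag hoff
    have h8 : ∑ v, (d * (f j v)^2 + c * ((T - f j v) * f j v))
        = d * S j + c * (T^2 - S j) := by
      rw [Finset.sum_add_distrib, ← Finset.mul_sum, ← Finset.mul_sum]
      congr 1
      congr 1
      have : ∀ v, (T - f j v) * f j v = T * f j v - (f j v)^2 := fun v => by ring
      simp only [this]
      rw [Finset.sum_sub_distrib, ← Finset.mul_sum, ← hT, sq]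
    have h9 : (q j).re ≤ d * S j + c * (T^2 - S j) := by
      refine h6.trans ?_
      refine (Finset.sum_le_sum fun v _ => h7 v).trans_eq h8
    have h10 : c * (T^2 - S j) ≤ c * S j := by
      apply mul_le_mul_of_nonneg_left _ hc0
      linarith
    calc (q j).re ≤ d * S j + c * S j := by linarith
      _ = (1 + Real.sqrt 2 / 2) * d * S j := by rw [hc]; ring
  -- final assembly
  have hfinal : ((B * A).trace).re = ∑ j, lam j * (q j).re := by
    rw [htrace, Complex.re_sum]
    exact Finset.sum_congr rfl fun j _ => Complex.re_ofReal_mul _ _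
  rw [hfinal]
  have hstep : ∑ j, lam j * (q j).re ≤ ∑ j, lam j * ((1 + Real.sqrt 2 / 2) * d * S j) :=
    Finset.sum_le_sum fun j _ => mul_le_mul_of_nonneg_left (key j) (hlam j)
  refine hstep.trans (le_of_eq ?_)
  have h14 : (1/4:ℝ)^n * (4:ℝ)^n = 1 := by
    rw [← mul_pow]; norm_num
  calc ∑ j, lam j * ((1 + Real.sqrt 2 / 2) * d * S j)
      = (1 + Real.sqrt 2 / 2) * d * ∑ j, lam j * S j := by
        rw [Finset.mul_sum]
        exact Finset.sum_congr rfl fun j _ => by ring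
    _ = (1 + Real.sqrt 2 / 2) * d * ((4:ℝ)^n / 2) := by rw [htrA]
    _ = 1/2 * (1 + Real.sqrt 2 / 2) * ((1/4:ℝ)^n * (4:ℝ)^n) := by rw [hd]; ring
    _ = 1/2 * (1 + Real.sqrt 2 / 2) := by rw [h14, mul_one]
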